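/- Every probability measure μ on the group G₂ = (ℤ/2ℤ)² whose support contains at most 2 elements belongs to TEC(G₂). -/

import Mathlib

open scoped BigOperators

/-- The group `G₂ = (ℤ/2ℤ)²`. -/
abbrev G2 : Type := ZMod 2 × ZMod 2

/-- The character pairing `(x,y) = (-1)^(x₁y₁+x₂y₂)`. -/
noncomputable def pairing2 (x y : G2) : ℝ :=
  (-1 : ℝ) ^ (x.1.val * y.1.val + x.2.val * y.2.val)

/-- A probability measure on `G₂`, given by its mass function. -/
def IsProb2 (p : G2 → ℝ) : Prop := (∀ x, 0 ≤ p x) ∧ ∑ x : G2, p x = 1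

/-- The characteristic function `μ̂(y) = Σ_x (x,y) μ({x})`. -/
noncomputable def charFn2 (p : G2 → ℝ) (y : G2) : ℝ := ∑ x : G2, pairing2 x y * p x

/-- The measure of a set `E ⊆ G₂`. -/
noncomputable def measOf2 (p : G2 → ℝ) (E : Set G2) : ℝ := ∑ x : G2, E.indicator p x

/-- `μ` has a trivial equivalence class: every probability measure `ν` with
`|ν̂| = |μ̂|` is a shift `μₓ` of `μ` (central symmetry is the identity on `G₂`). -/
def TEC2 (p : G2 → ℝ) : Prop :=
  ∀ q : G2 → ℝ, IsProb2 q → (∀ y : G2, |charFn2 q y| = |charFn2 p y|) →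
    ∃ x : G2, ∀ e : G2, q e = p (e + x)

/-- The support of `μ`: the set of points of positive mass. -/
def support2 (p : G2 → ℝ) : Set G2 := {x : G2 | 0 < p x}

/-- `a_max = max_{x∈G₂} μ({x})`. -/
noncomputable def amax2 (p : G2 → ℝ) : ℝ := sSup (Set.range p)

/- ### Auxiliary lemmas -/

lemma sum4 (f : G2 → ℝ) : ∑ x : G2, f x = f (0,0) + f (0,1) + f (1,0) + f (1,1) := by
  rw [Fintype.sum_prod_type]
  show (∑ x : Fin 2, ∑ y : Fin 2, f (x, y)) = _
  rw [Fin.sum_univ_two, Fin.sum_univ_two, Fin.sum_univ_two, ← add_assoc]; rfl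

lemma char01 (q : G2 → ℝ) : charFn2 q (0,1) = q (0,0) - q (0,1) + q (1,0) - q (1,1) := by
  rw [charFn2, sum4]; norm_num [pairing2, ZMod.val_one]; ring
lemma char10 (q : G2 → ℝ) : charFn2 q (1,0) = q (0,0) + q (0,1) - q (1,0) - q (1,1) := by
  rw [charFn2, sum4]; norm_num [pairing2, ZMod.val_one]; ring
lemma char11 (q : G2 → ℝ) : charFn2 q (1,1) = q (0,0) - q (0,1) - q (1,0) + q (1,1) := by
  rw [charFn2, sum4]; norm_num [pairing2, ZMod.val_one]; ring

lemma ptwise (f g : G2 → ℝ) (h1 : f (0,0) = g (0,0)) (h2 : f (0,1) = g (0,1))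
    (h3 : f (1,0) = g (1,0)) (h4 : f (1,1) = g (1,1)) : ∀ e, f e = g e := by
  intro e; fin_cases e <;> assumption

lemma mkshift (p q : G2 → ℝ) (x : G2) (h1 : q (0,0) = p ((0,0)+x)) (h2 : q (0,1) = p ((0,1)+x))
    (h3 : q (1,0) = p ((1,0)+x)) (h4 : q (1,1) = p ((1,1)+x)) :
    ∃ x : G2, ∀ e, q e = p (e + x) :=
  ⟨x, ptwise q (fun e => p (e + x)) h1 h2 h3 h4⟩

lemma mkshift00 (p q : G2 → ℝ) (h1 : q (0,0) = p (0,0)) (h2 : q (0,1) = p (0,1))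
    (h3 : q (1,0) = p (1,0)) (h4 : q (1,1) = p (1,1)) : ∃ x : G2, ∀ e, q e = p (e + x) :=
  mkshift p q (0,0) h1 h2 h3 h4
lemma mkshift01 (p q : G2 → ℝ) (h1 : q (0,0) = p (0,1)) (h2 : q (0,1) = p (0,0))
    (h3 : q (1,0) = p (1,1)) (h4 : q (1,1) = p (1,0)) : ∃ x : G2, ∀ e, q e = p (e + x) :=
  mkshift p q (0,1) h1 h2 h3 h4
lemma mkshift10 (p q : G2 → ℝ) (h1 : q (0,0) = p (1,0)) (h2 : q (0,1) = p (1,1))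
    (h3 : q (1,0) = p (0,0)) (h4 : q (1,1) = p (0,1)) : ∃ x : G2, ∀ e, q e = p (e + x) :=
  mkshift p q (1,0) h1 h2 h3 h4
lemma mkshift11 (p q : G2 → ℝ) (h1 : q (0,0) = p (1,1)) (h2 : q (0,1) = p (1,0))
    (h3 : q (1,0) = p (0,1)) (h4 : q (1,1) = p (0,0)) : ∃ x : G2, ∀ e, q e = p (e + x) :=
  mkshift p q (1,1) h1 h2 h3 h4

lemma core (s t a b c d w : ℝ) (hst : s + t = 1)
    (ha : 0 ≤ a) (hb : 0 ≤ b) (hc : 0 ≤ c) (hd : 0 ≤ d) (habcd : a + b + c + d = 1)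
    (hw : w = 1 ∨ w = -1)
    (h1 : |a + b - c - d| = 1)
    (h2 : |(a - b) + w * (c - d)| = |s - t|) :
    (c = 0 ∧ d = 0 ∧ ((a = s ∧ b = t) ∨ (a = t ∧ b = s))) ∨
    (a = 0 ∧ b = 0 ∧ ((c = s ∧ d = t) ∨ (c = t ∧ d = s))) := by
  rcases (abs_eq (by norm_num)).mp h1 with h | h
  · have hc0 : c = 0 := by linarith
    have hd0 : d = 0 := by linarith
    have h2' : |a - b| = |s - t| := by
      rw [show a - b = (a - b) + w * (c - d) by rw [hc0, hd0]; ring]; exact h2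
    refine Or.inl ⟨hc0, hd0, ?_⟩
    rcases abs_eq_abs.mp h2' with h' | h'
    · left; constructor <;> linarith
    · right; constructor <;> linarith
  · have ha0 : a = 0 := by linarith
    have hb0 : b = 0 := by linarith
    have h2' : |c - d| = |s - t| := by
      rcases hw with rfl | rfl
      · rw [show c - d = (a - b) + 1 * (c - d) by rw [ha0, hb0]; ring]; exact h2
      · rw [show c - d = -((a - b) + (-1) * (c - d)) by rw [ha0, hb0]; ring, abs_neg]
        exact h2
    refine Or.inr ⟨ha0, hb0, ?_⟩
    rcases abs_eq_abs.mp h2' with h' | h'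
    · left; constructor <;> linarith
    · right; constructor <;> linarith

lemma case1 (p q : G2 → ℝ) (hp : IsProb2 p) (hq : IsProb2 q)
    (hz1 : p (1,0) = 0) (hz2 : p (1,1) = 0)
    (heq : ∀ y : G2, |charFn2 q y| = |charFn2 p y|) : ∃ x : G2, ∀ e, q e = p (e + x) := by
  have hps := hp.2; rw [sum4] at hps
  have hqs := hq.2; rw [sum4] at hqs
  have e1 := heq (1,0); rw [char10, char10] at e1
  rw [show p (0,0) + p (0,1) - p (1,0) - p (1,1) = 1 by linarith, abs_one] at e1
  have e2 := heq (0,1); rw [char01, char01] at e2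
  rw [show p (0,0) - p (0,1) + p (1,0) - p (1,1) = p (0,0) - p (0,1) by linarith] at e2
  have h2 : |(q (0,0) - q (0,1)) + 1 * (q (1,0) - q (1,1))| = |p (0,0) - p (0,1)| := by
    rw [show (q (0,0) - q (0,1)) + 1 * (q (1,0) - q (1,1))
        = q (0,0) - q (0,1) + q (1,0) - q (1,1) by ring]; exact e2
  rcases core (p (0,0)) (p (0,1)) (q (0,0)) (q (0,1)) (q (1,0)) (q (1,1)) 1
      (by linarith) (hq.1 _) (hq.1 _) (hq.1 _) (hq.1 _) (by linarith) (Or.inl rfl)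
      e1 h2
    with ⟨hc0, hd0, ⟨h1', h2'⟩ | ⟨h1', h2'⟩⟩ | ⟨ha0, hb0, ⟨h1', h2'⟩ | ⟨h1', h2'⟩⟩
  · exact mkshift00 p q (by linarith) (by linarith) (by linarith) (by linarith)
  · exact mkshift01 p q (by linarith) (by linarith) (by linarith) (by linarith)
  · exact mkshift10 p q (by linarith) (by linarith) (by linarith) (by linarith)
  · exact mkshift11 p q (by linarith) (by linarith) (by linarith) (by linarith)

lemma case2 (p q : G2 → ℝ) (hp : IsProb2 p) (hq : IsProb2 q)
    (hz1 : p (0,1) = 0) (hz2 : p (1,1) = 0)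
    (heq : ∀ y : G2, |charFn2 q y| = |charFn2 p y|) : ∃ x : G2, ∀ e, q e = p (e + x) := by
  have hps := hp.2; rw [sum4] at hps
  have hqs := hq.2; rw [sum4] at hqs
  have e1 := heq (0,1); rw [char01, char01] at e1
  rw [show p (0,0) - p (0,1) + p (1,0) - p (1,1) = 1 by linarith, abs_one] at e1
  have h1 : |q (0,0) + q (1,0) - q (0,1) - q (1,1)| = 1 := by
    rw [show q (0,0) + q (1,0) - q (0,1) - q (1,1)
        = q (0,0) - q (0,1) + q (1,0) - q (1,1) by ring]; exact e1
  have e2 := heq (1,0); rw [char10, char10] at e2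
  rw [show p (0,0) + p (0,1) - p (1,0) - p (1,1) = p (0,0) - p (1,0) by linarith] at e2
  have h2 : |(q (0,0) - q (1,0)) + 1 * (q (0,1) - q (1,1))| = |p (0,0) - p (1,0)| := by
    rw [show (q (0,0) - q (1,0)) + 1 * (q (0,1) - q (1,1))
        = q (0,0) + q (0,1) - q (1,0) - q (1,1) by ring]; exact e2
  rcases core (p (0,0)) (p (1,0)) (q (0,0)) (q (1,0)) (q (0,1)) (q (1,1)) 1
      (by linarith) (hq.1 _) (hq.1 _) (hq.1 _) (hq.1 _) (by linarith) (Or.inl rfl)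
      h1 h2
    with ⟨hc0, hd0, ⟨h1', h2'⟩ | ⟨h1', h2'⟩⟩ | ⟨ha0, hb0, ⟨h1', h2'⟩ | ⟨h1', h2'⟩⟩
  · exact mkshift00 p q (by linarith) (by linarith) (by linarith) (by linarith)
  · exact mkshift10 p q (by linarith) (by linarith) (by linarith) (by linarith)
  · exact mkshift01 p q (by linarith) (by linarith) (by linarith) (by linarith)
  · exact mkshift11 p q (by linarith) (by linarith) (by linarith) (by linarith)

lemma case3 (p q : G2 → ℝ) (hp : IsProb2 p) (hq : IsProb2 q)
    (hz1 : p (0,1) = 0) (hz2 : p (1,0) = 0)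
    (heq : ∀ y : G2, |charFn2 q y| = |charFn2 p y|) : ∃ x : G2, ∀ e, q e = p (e + x) := by
  have hps := hp.2; rw [sum4] at hps
  have hqs := hq.2; rw [sum4] at hqs
  have e1 := heq (1,1); rw [char11, char11] at e1
  rw [show p (0,0) - p (0,1) - p (1,0) + p (1,1) = 1 by linarith, abs_one] at e1
  have h1 : |q (0,0) + q (1,1) - q (0,1) - q (1,0)| = 1 := by
    rw [show q (0,0) + q (1,1) - q (0,1) - q (1,0)
        = q (0,0) - q (0,1) - q (1,0) + q (1,1) by ring]; exact e1
  have e2 := heq (0,1); rw [char01, char01] at e2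
  rw [show p (0,0) - p (0,1) + p (1,0) - p (1,1) = p (0,0) - p (1,1) by linarith] at e2
  have h2 : |(q (0,0) - q (1,1)) + (-1) * (q (0,1) - q (1,0))| = |p (0,0) - p (1,1)| := by
    rw [show (q (0,0) - q (1,1)) + (-1) * (q (0,1) - q (1,0))
        = q (0,0) - q (0,1) + q (1,0) - q (1,1) by ring]; exact e2
  rcases core (p (0,0)) (p (1,1)) (q (0,0)) (q (1,1)) (q (0,1)) (q (1,0)) (-1)
      (by linarith) (hq.1 _) (hq.1 _) (hq.1 _) (hq.1 _) (by linarith) (Or.inr rfl)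
      h1 h2
    with ⟨hc0, hd0, ⟨h1', h2'⟩ | ⟨h1', h2'⟩⟩ | ⟨ha0, hb0, ⟨h1', h2'⟩ | ⟨h1', h2'⟩⟩
  · exact mkshift00 p q (by linarith) (by linarith) (by linarith) (by linarith)
  · exact mkshift11 p q (by linarith) (by linarith) (by linarith) (by linarith)
  · exact mkshift01 p q (by linarith) (by linarith) (by linarith) (by linarith)
  · exact mkshift10 p q (by linarith) (by linarith) (by linarith) (by linarith)

lemma case4 (p q : G2 → ℝ) (hp : IsProb2 p) (hq : IsProb2 q)
    (hz1 : p (0,0) = 0) (hz2 : p (1,0) = 0)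
    (heq : ∀ y : G2, |charFn2 q y| = |charFn2 p y|) : ∃ x : G2, ∀ e, q e = p (e + x) := by
  have hps := hp.2; rw [sum4] at hps
  have hqs := hq.2; rw [sum4] at hqs
  have e1 := heq (0,1); rw [char01, char01] at e1
  rw [show p (0,0) - p (0,1) + p (1,0) - p (1,1) = -1 by linarith,
      show |(-1 : ℝ)| = 1 by norm_num] at e1
  have h1 : |q (0,1) + q (1,1) - q (0,0) - q (1,0)| = 1 := by
    rw [show q (0,1) + q (1,1) - q (0,0) - q (1,0)
        = -(q (0,0) - q (0,1) + q (1,0) - q (1,1)) by ring, abs_neg]; exact e1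
  have e2 := heq (1,0); rw [char10, char10] at e2
  rw [show p (0,0) + p (0,1) - p (1,0) - p (1,1) = p (0,1) - p (1,1) by linarith] at e2
  have h2 : |(q (0,1) - q (1,1)) + 1 * (q (0,0) - q (1,0))| = |p (0,1) - p (1,1)| := by
    rw [show (q (0,1) - q (1,1)) + 1 * (q (0,0) - q (1,0))
        = q (0,0) + q (0,1) - q (1,0) - q (1,1) by ring]; exact e2
  rcases core (p (0,1)) (p (1,1)) (q (0,1)) (q (1,1)) (q (0,0)) (q (1,0)) 1
      (by linarith) (hq.1 _) (hq.1 _) (hq.1 _) (hq.1 _) (by linarith) (Or.inl rfl)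
      h1 h2
    with ⟨hc0, hd0, ⟨h1', h2'⟩ | ⟨h1', h2'⟩⟩ | ⟨ha0, hb0, ⟨h1', h2'⟩ | ⟨h1', h2'⟩⟩
  · exact mkshift00 p q (by linarith) (by linarith) (by linarith) (by linarith)
  · exact mkshift10 p q (by linarith) (by linarith) (by linarith) (by linarith)
  · exact mkshift01 p q (by linarith) (by linarith) (by linarith) (by linarith)
  · exact mkshift11 p q (by linarith) (by linarith) (by linarith) (by linarith)

lemma case5 (p q : G2 → ℝ) (hp : IsProb2 p) (hq : IsProb2 q)
    (hz1 : p (0,0) = 0) (hz2 : p (1,1) = 0)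
    (heq : ∀ y : G2, |charFn2 q y| = |charFn2 p y|) : ∃ x : G2, ∀ e, q e = p (e + x) := by
  have hps := hp.2; rw [sum4] at hps
  have hqs := hq.2; rw [sum4] at hqs
  have e1 := heq (1,1); rw [char11, char11] at e1
  rw [show p (0,0) - p (0,1) - p (1,0) + p (1,1) = -1 by linarith,
      show |(-1 : ℝ)| = 1 by norm_num] at e1
  have h1 : |q (0,1) + q (1,0) - q (0,0) - q (1,1)| = 1 := by
    rw [show q (0,1) + q (1,0) - q (0,0) - q (1,1)
        = -(q (0,0) - q (0,1) - q (1,0) + q (1,1)) by ring, abs_neg]; exact e1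
  have e2 := heq (0,1); rw [char01, char01] at e2
  rw [show p (0,0) - p (0,1) + p (1,0) - p (1,1) = p (1,0) - p (0,1) by linarith,
      abs_sub_comm (p (1,0)) (p (0,1))] at e2
  have h2 : |(q (0,1) - q (1,0)) + (-1) * (q (0,0) - q (1,1))| = |p (0,1) - p (1,0)| := by
    rw [show (q (0,1) - q (1,0)) + (-1) * (q (0,0) - q (1,1))
        = -(q (0,0) - q (0,1) + q (1,0) - q (1,1)) by ring, abs_neg]; exact e2
  rcases core (p (0,1)) (p (1,0)) (q (0,1)) (q (1,0)) (q (0,0)) (q (1,1)) (-1)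
      (by linarith) (hq.1 _) (hq.1 _) (hq.1 _) (hq.1 _) (by linarith) (Or.inr rfl)
      h1 h2
    with ⟨hc0, hd0, ⟨h1', h2'⟩ | ⟨h1', h2'⟩⟩ | ⟨ha0, hb0, ⟨h1', h2'⟩ | ⟨h1', h2'⟩⟩
  · exact mkshift00 p q (by linarith) (by linarith) (by linarith) (by linarith)
  · exact mkshift11 p q (by linarith) (by linarith) (by linarith) (by linarith)
  · exact mkshift01 p q (by linarith) (by linarith) (by linarith) (by linarith)
  · exact mkshift10 p q (by linarith) (by linarith) (by linarith) (by linarith)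

lemma case6 (p q : G2 → ℝ) (hp : IsProb2 p) (hq : IsProb2 q)
    (hz1 : p (0,0) = 0) (hz2 : p (0,1) = 0)
    (heq : ∀ y : G2, |charFn2 q y| = |charFn2 p y|) : ∃ x : G2, ∀ e, q e = p (e + x) := by
  have hps := hp.2; rw [sum4] at hps
  have hqs := hq.2; rw [sum4] at hqs
  have e1 := heq (1,0); rw [char10, char10] at e1
  rw [show p (0,0) + p (0,1) - p (1,0) - p (1,1) = -1 by linarith,
      show |(-1 : ℝ)| = 1 by norm_num] at e1
  have h1 : |q (1,0) + q (1,1) - q (0,0) - q (0,1)| = 1 := by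
    rw [show q (1,0) + q (1,1) - q (0,0) - q (0,1)
        = -(q (0,0) + q (0,1) - q (1,0) - q (1,1)) by ring, abs_neg]; exact e1
  have e2 := heq (0,1); rw [char01, char01] at e2
  rw [show p (0,0) - p (0,1) + p (1,0) - p (1,1) = p (1,0) - p (1,1) by linarith] at e2
  have h2 : |(q (1,0) - q (1,1)) + 1 * (q (0,0) - q (0,1))| = |p (1,0) - p (1,1)| := by
    rw [show (q (1,0) - q (1,1)) + 1 * (q (0,0) - q (0,1))
        = q (0,0) - q (0,1) + q (1,0) - q (1,1) by ring]; exact e2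
  rcases core (p (1,0)) (p (1,1)) (q (1,0)) (q (1,1)) (q (0,0)) (q (0,1)) 1
      (by linarith) (hq.1 _) (hq.1 _) (hq.1 _) (hq.1 _) (by linarith) (Or.inl rfl)
      h1 h2
    with ⟨hc0, hd0, ⟨h1', h2'⟩ | ⟨h1', h2'⟩⟩ | ⟨ha0, hb0, ⟨h1', h2'⟩ | ⟨h1', h2'⟩⟩
  · exact mkshift00 p q (by linarith) (by linarith) (by linarith) (by linarith)
  · exact mkshift01 p q (by linarith) (by linarith) (by linarith) (by linarith)
  · exact mkshift10 p q (by linarith) (by linarith) (by linarith) (by linarith)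
  · exact mkshift11 p q (by linarith) (by linarith) (by linarith) (by linarith)

lemma three_le (p : G2 → ℝ) (u v w : G2) (huv : u ≠ v) (huw : u ≠ w) (hvw : v ≠ w)
    (hu : 0 < p u) (hv : 0 < p v) (hw : 0 < p w) : 3 ≤ (support2 p).ncard := by
  have hsub : ({u, v, w} : Set G2) ⊆ support2 p := by
    intro x hx
    rcases hx with rfl | rfl | rfl
    · exact hu
    · exact hv
    · exact hw
  have h3 : ({u, v, w} : Set G2).ncard = 3 :=
    Set.ncard_eq_three.mpr ⟨u, v, w, huv, huw, hvw, rfl⟩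
  calc 3 = ({u, v, w} : Set G2).ncard := h3.symm
    _ ≤ _ := Set.ncard_le_ncard hsub (Set.toFinite _)

/-- Theorem 3, case 1: every probability measure on `G₂` whose support
has at most 2 elements belongs to `TEC(G₂)`. -/
theorem stmt15 (p : G2 → ℝ) (hp : IsProb2 p)
    (hsupp : (support2 p).ncard ≤ 2) :
    TEC2 p := by
  intro q hq heq
  rcases (hp.1 (0,0)).lt_or_eq with h00 | h00 <;>
  rcases (hp.1 (0,1)).lt_or_eq with h01 | h01 <;>
  rcases (hp.1 (1,0)).lt_or_eq with h10 | h10 <;>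
  rcases (hp.1 (1,1)).lt_or_eq with h11 | h11
  · exfalso
    have h3 := three_le p (0,0) (0,1) (1,0) (by decide) (by decide) (by decide) h00 h01 h10
    omega
  · exfalso
    have h3 := three_le p (0,0) (0,1) (1,0) (by decide) (by decide) (by decide) h00 h01 h10
    omega
  · exfalso
    have h3 := three_le p (0,0) (0,1) (1,1) (by decide) (by decide) (by decide) h00 h01 h11
    omega
  · exact case1 p q hp hq h10.symm h11.symm heq
  · exfalso
    have h3 := three_le p (0,0) (1,0) (1,1) (by decide) (by decide) (by decide) h00 h10 h11
    omega
  · exact case2 p q hp hq h01.symm h11.symm heq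
  · exact case3 p q hp hq h01.symm h10.symm heq
  · exact case1 p q hp hq h10.symm h11.symm heq
  · exfalso
    have h3 := three_le p (0,1) (1,0) (1,1) (by decide) (by decide) (by decide) h01 h10 h11
    omega
  · exact case5 p q hp hq h00.symm h11.symm heq
  · exact case4 p q hp hq h00.symm h10.symm heq
  · exact case1 p q hp hq h10.symm h11.symm heq
  · exact case6 p q hp hq h00.symm h01.symm heq
  · exact case6 p q hp hq h00.symm h01.symm heq
  · exact case6 p q hp hq h00.symm h01.symm heq
  · exact case1 p q hp hq h10.symm h11.symm heq
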